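/- arXiv:1203.4870 — 2 statements merged into one kernel-verified Lean document; each statement's English description precedes it below -/
import Mathlib

section
/- Let M ≥ 1, let s ∈ ℝ^M be a sign vector, and let D = {e ∈ ℝ^M : ‖e‖₂ = 1 and −s_i e_i ≥ 0 for all i}. Let v ∈ ℝ^M, define v̄ = −s ⊙ v, and let I = {i : v̄_i > 0}. If I is nonempty, define e* ∈ ℝ^M by e*_i = v_i / ‖v_I‖₂ for i ∈ I and e*_i = 0 for i ∉ I, where v_I denotes the restriction of v to the indices in I. Then e* ∈ D and ‖e* − v‖₂ ≤ ‖e − v‖₂ for every e ∈ D; that is, e* is a Euclidean projection of v onto the nonconvex set D. -/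
/-- Case 1 of Lemma 1: projection onto the feasible set of quantization errors in
1-bit CS, when the index set `I` of positive entries of `v̄ = -s ⊙ v` is nonempty. -/
theorem stmt_0 (M : ℕ) (hM : 1 ≤ M)
    (s : EuclideanSpace ℝ (Fin M)) (hs : ∀ i, s i = 1 ∨ s i = -1)
    (D : Set (EuclideanSpace ℝ (Fin M)))
    (hD : D = {e : EuclideanSpace ℝ (Fin M) | ‖e‖ = 1 ∧ ∀ i, -(s i) * e i ≥ 0})
    (v : EuclideanSpace ℝ (Fin M))
    (vbar : Fin M → ℝ) (hvbar : ∀ i, vbar i = -(s i) * v i)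
    (I : Finset (Fin M)) (hI : I = Finset.univ.filter (fun i => 0 < vbar i))
    (hInonempty : I.Nonempty)
    (estar : EuclideanSpace ℝ (Fin M))
    (hestar : ∀ i, estar i =
      if i ∈ I then v i / Real.sqrt (∑ j ∈ I, (v j) ^ 2) else 0) :
    estar ∈ D ∧ ∀ e ∈ D, ‖estar - v‖ ≤ ‖e - v‖ := by
  have hnorm : ∀ x : EuclideanSpace ℝ (Fin M), ‖x‖ = Real.sqrt (∑ i, (x i)^2) := by
    intro x; rw [EuclideanSpace.norm_eq]; simp [Real.norm_eq_abs, sq_abs]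
  have hs2 : ∀ i, (s i)^2 = 1 := by
    intro i; rcases hs i with h | h <;> rw [h] <;> norm_num
  set A := ∑ j ∈ I, (v j)^2 with hAdef
  set r := Real.sqrt A with hrdef
  have hmemI : ∀ i, i ∈ I ↔ 0 < vbar i := by
    intro i; rw [hI]; simp
  obtain ⟨i0, hi0⟩ := hInonempty
  have hv0 : v i0 ≠ 0 := by
    have h := (hmemI i0).mp hi0
    rw [hvbar] at h
    intro hv; rw [hv] at h; simp at h
  have hA : 0 < A := by
    have h1 : (v i0)^2 ≤ A := Finset.single_le_sum (fun j _ => sq_nonneg (v j)) hi0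
    have h2 : 0 < (v i0)^2 := lt_of_le_of_ne (sq_nonneg _) (Ne.symm (pow_ne_zero 2 hv0))
    linarith
  have hr : 0 < r := Real.sqrt_pos.mpr hA
  have hr2 : r^2 = A := Real.sq_sqrt hA.le
  set C := ∑ j ∈ Iᶜ, (v j)^2 with hCdef
  have hC : 0 ≤ C := Finset.sum_nonneg fun j _ => sq_nonneg _
  have hestar_sq : ∑ i, (estar i)^2 = 1 := by
    have h : ∀ i, (estar i)^2 = if i ∈ I then (v i)^2 / r^2 else 0 := by
      intro i
      rw [hestar i]
      split <;> simp [div_pow]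
    simp_rw [h]
    rw [Finset.sum_ite_mem, Finset.univ_inter, ← Finset.sum_div, ← hAdef, hr2,
      div_self hA.ne']
  have hkey : A * (1/r - 1)^2 = 1 - 2*r + A := by
    rw [← hr2]; field_simp; ring
  have hestar_diff : ∑ i, (estar i - v i)^2 = 1 - 2*r + A + C := by
    have hterm : ∀ i, (estar i - v i)^2 =
        (if i ∈ I then (v i)^2 * ((1/r - 1)^2) else (v i)^2) := by
      intro i
      rw [hestar i]
      split
      · rw [div_eq_mul_one_div]; ring
      · ring
    simp_rw [hterm]
    rw [← Finset.sum_add_sum_compl I]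
    have h1 : ∑ i ∈ I, (if i ∈ I then (v i)^2 * ((1/r - 1)^2) else (v i)^2)
        = ∑ i ∈ I, (v i)^2 * ((1/r - 1)^2) :=
      Finset.sum_congr rfl fun i hi => by simp [hi]
    have h2 : ∑ i ∈ Iᶜ, (if i ∈ I then (v i)^2 * ((1/r - 1)^2) else (v i)^2)
        = C := Finset.sum_congr rfl fun i hi => by
      simp [Finset.mem_compl.mp hi]
    rw [h1, h2, ← Finset.sum_mul, ← hAdef, hkey]
  constructor
  · rw [hD]
    refine ⟨?_, ?_⟩
    · rw [hnorm, hestar_sq, Real.sqrt_one]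
    · intro i
      rw [hestar i]
      split
      · rename_i hi
        have hpos := (hmemI i).mp hi
        rw [hvbar] at hpos
        have heq : -(s i) * (v i / r) = (-(s i) * v i) / r := by ring
        rw [heq]
        exact div_nonneg hpos.le hr.le
      · simp
  · intro e he
    rw [hD] at he
    obtain ⟨he1, he2⟩ := he
    have he_sq : ∑ i, (e i)^2 = 1 := by
      rw [hnorm] at he1
      exact (Real.sqrt_eq_one.mp he1)
    have hcs : ∑ i ∈ I, e i * v i ≤ r := by
      have h1 : (∑ i ∈ I, e i * v i)^2 ≤ (∑ i ∈ I, (e i)^2) * A :=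
        Finset.sum_mul_sq_le_sq_mul_sq I e v
      have h2 : ∑ i ∈ I, (e i)^2 ≤ 1 := by
        rw [← he_sq]
        exact Finset.sum_le_sum_of_subset_of_nonneg (Finset.subset_univ I)
          (fun i _ _ => sq_nonneg _)
      nlinarith [hr, hr2, hA]
    have hneg : ∑ i ∈ Iᶜ, e i * v i ≤ 0 := by
      apply Finset.sum_nonpos
      intro i hi
      have hvb : vbar i ≤ 0 := not_lt.mp (fun h => Finset.mem_compl.mp hi ((hmemI i).mpr h))
      have hsei := he2 i
      have heq : e i * v i = (-(s i) * e i) * vbar i := by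
        rw [hvbar i]
        linear_combination (-(e i * v i)) * hs2 i
      rw [heq]
      exact mul_nonpos_of_nonneg_of_nonpos hsei hvb
    have hT : ∑ i, e i * v i ≤ r := by
      rw [← Finset.sum_add_sum_compl I (fun i => e i * v i)]
      linarith
    have hv_sq : ∑ i, (v i)^2 = A + C := (Finset.sum_add_sum_compl I _).symm
    have hediff : ∑ i, (e i - v i)^2 = 1 - 2*(∑ i, e i * v i) + (A + C) := by
      have h : ∀ i, (e i - v i)^2 = (e i)^2 - 2*(e i * v i) + (v i)^2 := fun i => by ring
      simp_rw [h]
      rw [Finset.sum_add_distrib, Finset.sum_sub_distrib, he_sq, ← Finset.mul_sum, hv_sq]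
    rw [hnorm, hnorm]
    apply Real.sqrt_le_sqrt
    simp only [PiLp.sub_apply]
    rw [hestar_diff, hediff]
    linarith
end

section
/- Let M ≥ 1, let s ∈ ℝ^M be a sign vector, and let D = {e ∈ ℝ^M : ‖e‖₂ = 1 and −s_i e_i ≥ 0 for all i}. Let v ∈ ℝ^M and define v̄ = −s ⊙ v. Suppose v̄_i ≤ 0 for all i (i.e., the set {i : v̄_i > 0} is empty), and let i₀ be an index attaining the maximum of v̄ over all coordinates. Define e* ∈ ℝ^M by e*_{i₀} = −s_{i₀} and e*_i = 0 for all i ≠ i₀. Then e* ∈ D and ‖e* − v‖₂ ≤ ‖e − v‖₂ for every e ∈ D; that is, e* is a Euclidean projection of v onto the nonconvex set D. -/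
open Finset RealInnerProductSpace in
/-- Case 2 of Lemma 1: projection onto the feasible set of quantization errors in
1-bit CS, when all entries of `v̄ = -s ⊙ v` are nonpositive. -/
theorem stmt_1 (M : ℕ) (hM : 1 ≤ M)
    (s : EuclideanSpace ℝ (Fin M)) (hs : ∀ i, s i = 1 ∨ s i = -1)
    (D : Set (EuclideanSpace ℝ (Fin M)))
    (hD : D = {e : EuclideanSpace ℝ (Fin M) | ‖e‖ = 1 ∧ ∀ i, -(s i) * e i ≥ 0})
    (v : EuclideanSpace ℝ (Fin M))
    (vbar : Fin M → ℝ) (hvbar : ∀ i, vbar i = -(s i) * v i)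
    (hneg : ∀ i, vbar i ≤ 0)
    (i₀ : Fin M) (hi₀ : ∀ i, vbar i ≤ vbar i₀)
    (estar : EuclideanSpace ℝ (Fin M))
    (hestar : ∀ i, estar i = if i = i₀ then -(s i₀) else 0) :
    estar ∈ D ∧ ∀ e ∈ D, ‖estar - v‖ ≤ ‖e - v‖ := by
  have hsq : ∀ i, s i * s i = 1 := by
    intro i; rcases hs i with h | h <;> rw [h] <;> ring
  have hnorm_star : ‖estar‖ = 1 := by
    rw [EuclideanSpace.norm_eq]
    have : ∑ i, ‖estar i‖ ^ 2 = 1 := by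
      rw [Finset.sum_eq_single i₀]
      · rw [hestar i₀]; simp only [if_pos rfl]
        rcases hs i₀ with h | h <;> rw [h] <;> norm_num
      · intro i _ hne; rw [hestar i, if_neg hne]; norm_num
      · intro h; exact absurd (Finset.mem_univ i₀) h
    rw [this, Real.sqrt_one]
  have hstarD : estar ∈ D := by
    rw [hD]
    refine ⟨hnorm_star, fun i => ?_⟩
    rw [hestar i]
    by_cases h : i = i₀
    · subst h; rw [if_pos rfl]
      have := hsq i; nlinarith
    · rw [if_neg h]; simp
  refine ⟨hstarD, fun e he => ?_⟩
  rw [hD] at he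
  obtain ⟨hne, hpos⟩ := he
  -- inner products
  have hinner_star : (inner ℝ estar v : ℝ) = vbar i₀ := by
    rw [PiLp.inner_apply]
    rw [Finset.sum_eq_single i₀]
    · rw [hestar i₀, if_pos rfl, hvbar i₀]; simp [mul_comm]
    · intro i _ hne'; rw [hestar i, if_neg hne']; simp
    · intro h; exact absurd (Finset.mem_univ i₀) h
  set eb : Fin M → ℝ := fun i => -(s i) * e i with heb
  have heb_nonneg : ∀ i, 0 ≤ eb i := fun i => hpos i
  have he_eq : ∀ i, e i = -(s i) * eb i := by
    intro i; simp only [heb]; rcases hs i with h | h <;> rw [h] <;> ring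
  have hsum_sq : ∑ i, eb i ^ 2 = 1 := by
    have h1 : ∑ i, ‖e i‖ ^ 2 = 1 := by
      have := hne
      rw [EuclideanSpace.norm_eq] at this
      have h0 : 0 ≤ ∑ i, ‖e i‖ ^ 2 :=
        Finset.sum_nonneg fun i _ => by positivity
      nlinarith [Real.sq_sqrt h0]
    rw [← h1]
    refine Finset.sum_congr rfl fun i _ => ?_
    rw [Real.norm_eq_abs, sq_abs]
    show (-s i * e i) ^ 2 = e i ^ 2
    rcases hs i with h | h <;> rw [h] <;> ring
  have heb_le_one : ∀ i, eb i ≤ 1 := by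
    intro i
    have h1 : eb i ^ 2 ≤ 1 := by
      rw [← hsum_sq]
      exact Finset.single_le_sum (f := fun j => eb j ^ 2) (fun j _ => by positivity) (Finset.mem_univ i)
    nlinarith [heb_nonneg i]
  have hsum_ge : 1 ≤ ∑ i, eb i := by
    rw [← hsum_sq]
    refine Finset.sum_le_sum fun i _ => ?_
    have := heb_nonneg i; have := heb_le_one i; nlinarith
  have hinner_le : (inner ℝ e v : ℝ) ≤ vbar i₀ := by
    rw [PiLp.inner_apply]
    simp only [RCLike.inner_apply', conj_trivial]
    have h1 : ∀ i ∈ Finset.univ, (e i : ℝ) * v i ≤ eb i * vbar i₀ := by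
      intro i _
      have : (e i : ℝ) * v i = eb i * vbar i := by
        rw [he_eq i, hvbar i]; ring
      rw [this]
      exact mul_le_mul_of_nonneg_left (hi₀ i) (heb_nonneg i)
    calc ∑ i, (e i : ℝ) * v i ≤ ∑ i, eb i * vbar i₀ := Finset.sum_le_sum h1
      _ = (∑ i, eb i) * vbar i₀ := by rw [← Finset.sum_mul]
      _ ≤ 1 * vbar i₀ := by
          have := hneg i₀
          nlinarith [hsum_ge]
      _ = vbar i₀ := one_mul _
  -- conclude
  have hsq1 : ‖estar - v‖ ^ 2 ≤ ‖e - v‖ ^ 2 := by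
    rw [norm_sub_sq_real, norm_sub_sq_real, hnorm_star, hne, hinner_star]
    nlinarith [hinner_le]
  have h0 : (0:ℝ) ≤ ‖estar - v‖ := norm_nonneg _
  have h1 : (0:ℝ) ≤ ‖e - v‖ := norm_nonneg _
  nlinarith [hsq1]
end
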